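/- arXiv:2604.00428 — 3 statements merged into one kernel-verified Lean document; each statement's English description precedes it below -/
import Mathlib

section
/- Let τ^i be a walk from x_i to v_i of length h (the active prefix terminal states), and σ^i a walk from v_i to g_i, for each agent i, such that the prefixes are pairwise conflict-free and the tails are pairwise conflict-free. If additionally the tails are synchronized to start exactly at time h, then the concatenated walks τ^i ⧺ σ^i are pairwise conflict-free walks from x_i to g_i. -/
/-- Concatenation of a length-`h` prefix with a tail starting at time `h`. -/
def concatWalk {V : Type*} (h : ℕ) (τ σ : ℕ → V) : ℕ → V :=
  fun t => if t ≤ h then τ t else σ (t - h)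

/-- Concatenating pairwise conflict-free active prefixes (walks from `x_i` to
`v_i` of length `h`) with pairwise conflict-free synchronized tails (walks
from `v_i` to `g_i` of length `L`) yields pairwise conflict-free walks from
`x_i` to `g_i`. -/
theorem concat_conflict_free {V : Type*} (E : V → V → Prop)
    (N : ℕ) (h L : ℕ) (x v g : Fin N → V) (τ σ : Fin N → ℕ → V)
    (hτwalk : ∀ i, ∀ t < h, E (τ i t) (τ i (t + 1)))
    (hσwalk : ∀ i, ∀ t < L, E (σ i t) (σ i (t + 1)))
    (hτ0 : ∀ i, τ i 0 = x i) (hτh : ∀ i, τ i h = v i)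
    (hσ0 : ∀ i, σ i 0 = v i) (hσL : ∀ i, σ i L = g i)
    (hcfτ : ∀ i j : Fin N, i ≠ j →
      (∀ t ≤ h, τ i t ≠ τ j t) ∧
      (∀ t < h, ¬(τ i (t + 1) = τ j t ∧ τ i t = τ j (t + 1))))
    (hcfσ : ∀ i j : Fin N, i ≠ j →
      (∀ t ≤ L, σ i t ≠ σ j t) ∧
      (∀ t < L, ¬(σ i (t + 1) = σ j t ∧ σ i t = σ j (t + 1)))) :
    (∀ i, concatWalk h (τ i) (σ i) 0 = x i ∧
        concatWalk h (τ i) (σ i) (h + L) = g i ∧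
        ∀ t < h + L,
          E (concatWalk h (τ i) (σ i) t) (concatWalk h (τ i) (σ i) (t + 1))) ∧
    (∀ i j : Fin N, i ≠ j →
      (∀ t ≤ h + L, concatWalk h (τ i) (σ i) t ≠ concatWalk h (τ j) (σ j) t) ∧
      (∀ t < h + L,
        ¬(concatWalk h (τ i) (σ i) (t + 1) = concatWalk h (τ j) (σ j) t ∧
          concatWalk h (τ i) (σ i) t = concatWalk h (τ j) (σ j) (t + 1)))) := by

  have key : ∀ i, ∀ t, h ≤ t → concatWalk h (τ i) (σ i) t = σ i (t - h) := by
    intro i t ht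
    unfold concatWalk
    rcases eq_or_lt_of_le ht with rfl | ht'
    · simp [hτh, hσ0]
    · rw [if_neg (by omega)]
  have key' : ∀ i, ∀ t, t ≤ h → concatWalk h (τ i) (σ i) t = τ i t := by
    intro i t ht; unfold concatWalk; rw [if_pos ht]
  constructor
  · intro i
    refine ⟨by rw [key' i 0 (Nat.zero_le _), hτ0], ?_, ?_⟩
    · rw [key i (h + L) (by omega)]; simp [hσL]
    · intro t ht
      by_cases hc : t + 1 ≤ h
      · rw [key' i t (by omega), key' i (t+1) hc]
        exact hτwalk i t (by omega)
      · rw [key i t (by omega), key i (t+1) (by omega)]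
        have : t + 1 - h = (t - h) + 1 := by omega
        rw [this]
        exact hσwalk i (t - h) (by omega)
  · intro i j hij
    constructor
    · intro t ht
      by_cases hc : t ≤ h
      · rw [key' i t hc, key' j t hc]; exact (hcfτ i j hij).1 t hc
      · rw [key i t (by omega), key j t (by omega)]
        exact (hcfσ i j hij).1 (t - h) (by omega)
    · intro t ht
      by_cases hc : t + 1 ≤ h
      · rw [key' i t (by omega), key' j t (by omega), key' i (t+1) hc, key' j (t+1) hc]
        exact (hcfτ i j hij).2 t (by omega)
      · rw [key i t (by omega), key j t (by omega), key i (t+1) (by omega),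
          key j (t+1) (by omega)]
        have e : t + 1 - h = (t - h) + 1 := by omega
        rw [e]
        exact (hcfσ i j hij).2 (t - h) (by omega)
end

section
/- In a finite reflexive directed graph where every goal vertex is reachable from every agent's position, and on which there exists at least one conflict-free joint solution, a closed-loop controller that at each step maintains a valid certificate (a conflict-free joint trajectory set from the current state to the goals) and executes its first step drives all agents to their goals within B_0 timesteps, where B_0 is the initial certificate's cost. -/
/-- Completeness of certificate-driven closed-loop control: in a finite
reflexive directed graph where every goal is reachable and a conflict-free
joint solution exists, a closed-loop controller that maintains a valid
certificate (a pairwise conflict-free joint trajectory set from the current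
state to the goals, with budget recursion
`B (t+1) ≤ B t − ∑_i p_i(x_t(i))`) and executes its first step drives all
agents to their goals within `B 0` timesteps. -/
theorem certificate_controller_complete {V : Type*} [Fintype V] [DecidableEq V]
    (E : V → V → Prop) (hrefl : ∀ u, E u u)
    (N : ℕ) (g : Fin N → V)
    (x : ℕ → Fin N → V)
    (hreach : ∀ (u : V) (i : Fin N), ∃ (L : ℕ) (σ : ℕ → V),
        (∀ t < L, E (σ t) (σ (t + 1))) ∧ σ 0 = u ∧ σ L = g i)
    -- a conflict-free joint solution from the initial state exists
    (hsol : ∃ (M : ℕ) (sol : Fin N → ℕ → V),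
        (∀ i, sol i 0 = x 0 i) ∧ (∀ i, sol i M = g i) ∧
        (∀ i, ∀ t < M, E (sol i t) (sol i (t + 1))) ∧
        (∀ i j : Fin N, i ≠ j →
          (∀ t ≤ M, sol i t ≠ sol j t) ∧
          (∀ t < M, ¬(sol i (t + 1) = sol j t ∧ sol i t = sol j (t + 1)))))
    -- the certificates maintained by the controller
    (M : ℕ → ℕ) (cert : ℕ → Fin N → ℕ → V) (B : ℕ → ℕ)
    (hstart : ∀ t i, cert t i 0 = x t i)
    (hgoal : ∀ t i, cert t i (M t) = g i)
    (hcertwalk : ∀ t i, ∀ s < M t, E (cert t i s) (cert t i (s + 1)))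
    (hstay : ∀ t i s, cert t i s = g i → cert t i (s + 1) = g i)
    (hcf : ∀ t, ∀ i j : Fin N, i ≠ j →
      (∀ s ≤ M t, cert t i s ≠ cert t j s) ∧
      (∀ s < M t,
        ¬(cert t i (s + 1) = cert t j s ∧ cert t i s = cert t j (s + 1))))
    (hcost : ∀ t, B t = ∑ i, ∑ s ∈ Finset.range (M t),
        (if cert t i s = g i then 0 else 1))
    -- the controller executes the first step of the certificate
    (hexec : ∀ t i, x (t + 1) i = cert t i 1)
    -- valid certificate updates
    (hupdate : ∀ t, B (t + 1) ≤ B t - ∑ i, (if x t i = g i then 0 else 1)) :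
    ∀ i, x (B 0) i = g i := by
  have hBzero : ∀ t, B t = 0 → ∀ i, x t i = g i := by
    intro t hB i
    rcases Nat.eq_zero_or_pos (M t) with hM | hM
    · have h := hgoal t i
      rw [hM, hstart t i] at h
      exact h
    · have h := (hcost t).symm
      rw [hB] at h
      have h2 := (Finset.sum_eq_zero_iff).mp h i (Finset.mem_univ i)
      have h3 := (Finset.sum_eq_zero_iff).mp h2 0 (Finset.mem_range.mpr hM)
      rw [← hstart t i]
      by_contra hc
      simp [hc] at h3
  have key : ∀ t, (∀ i, x t i = g i) ∨ B t + t ≤ B 0 := by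
    intro t
    induction t with
    | zero => right; simp
    | succ t ih =>
      by_cases hg : ∀ i, x t i = g i
      · left
        intro i
        rw [hexec t i]
        exact hstay t i 0 (by rw [hstart t i, hg i])
      · rcases ih with h | h
        · exact absurd h hg
        right
        have hBpos : B t ≠ 0 := fun h0 => hg (hBzero t h0)
        push_neg at hg
        obtain ⟨j, hj⟩ := hg
        have hsum : 1 ≤ ∑ i, (if x t i = g i then (0:ℕ) else 1) := by
          calc (1:ℕ) = (if x t j = g j then 0 else 1) := by simp [hj]
          _ ≤ _ := Finset.single_le_sum
              (f := fun i => if x t i = g i then (0:ℕ) else 1)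
              (fun i _ => Nat.zero_le _) (Finset.mem_univ j)
        have hu := hupdate t
        omega
  rcases key (B 0) with h | h
  · exact h
  · exact hBzero (B 0) (by omega)
end

section
/- Suppose the joint cost decomposes over a partition A = A_1 ⊔ … ⊔ A_K (C(τ^A) = ∑_k C(τ^{A_k})) and any conflict involves only agents whose trajectories both visit some common vertex. If agents in different groups have disjoint reachable regions and all considered trajectories stay within each agent's reachable region, then a joint trajectory set is conflict-free iff each group's trajectory set is conflict-free, and it is cost-minimal among such region-respecting conflict-free sets iff each group's trajectory set is cost-minimal for its group. -/
/-- Exact decomposition of conflict-free planning across a budget-limited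
factorization. Agents are partitioned into groups by a labeling `f`; agents
in different groups have disjoint reachable regions, and all considered
trajectories stay within each agent's region. The joint cost is the sum of
per-agent costs (hence decomposes over groups). Then:
(i) a region-respecting joint trajectory set is conflict-free iff each group's
trajectory set is conflict-free; and
(ii) it is cost-minimal among region-respecting conflict-free joint sets iff
each group's trajectory set is cost-minimal for its group. -/
theorem factorized_planning_decomposition {V ι κ : Type*}
    [Fintype ι] [DecidableEq κ] (f : ι → κ)
    (R : ι → Set V)
    (hdisj : ∀ i j : ι, f i ≠ f j → R i ∩ R j = ∅)
    (T : ℕ) (c : ι → (ℕ → V) → ℕ)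
    (τ : ι → ℕ → V)
    (hτR : ∀ i : ι, ∀ t ≤ T, τ i t ∈ R i) :
    -- (i) conflict-freedom decomposes across groups
    ((∀ i j : ι, i ≠ j →
        (∀ t ≤ T, τ i t ≠ τ j t) ∧
        (∀ t < T, ¬(τ i (t + 1) = τ j t ∧ τ i t = τ j (t + 1)))) ↔
      (∀ k : κ, ∀ i j : ι, f i = k → f j = k → i ≠ j →
        (∀ t ≤ T, τ i t ≠ τ j t) ∧
        (∀ t < T, ¬(τ i (t + 1) = τ j t ∧ τ i t = τ j (t + 1)))))
    ∧
    -- (ii) cost-minimality decomposes across groups (assuming τ is a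
    -- region-respecting conflict-free candidate)
    ((∀ i j : ι, i ≠ j →
        (∀ t ≤ T, τ i t ≠ τ j t) ∧
        (∀ t < T, ¬(τ i (t + 1) = τ j t ∧ τ i t = τ j (t + 1)))) →
      ((∀ σ : ι → ℕ → V,
          (∀ i : ι, ∀ t ≤ T, σ i t ∈ R i) →
          (∀ i j : ι, i ≠ j →
            (∀ t ≤ T, σ i t ≠ σ j t) ∧
            (∀ t < T, ¬(σ i (t + 1) = σ j t ∧ σ i t = σ j (t + 1)))) →
          ∑ i, c i (τ i) ≤ ∑ i, c i (σ i)) ↔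
        (∀ k : κ, ∀ σ : ι → ℕ → V,
          (∀ i : ι, f i = k → ∀ t ≤ T, σ i t ∈ R i) →
          (∀ i j : ι, f i = k → f j = k → i ≠ j →
            (∀ t ≤ T, σ i t ≠ σ j t) ∧
            (∀ t < T, ¬(σ i (t + 1) = σ j t ∧ σ i t = σ j (t + 1)))) →
          ∑ i ∈ Finset.univ.filter (fun i => f i = k), c i (τ i)
            ≤ ∑ i ∈ Finset.univ.filter (fun i => f i = k), c i (σ i)))) := by

  classical
  have cross : ∀ (σ : ι → ℕ → V), (∀ i : ι, ∀ t ≤ T, σ i t ∈ R i) →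
      ∀ i j : ι, f i ≠ f j →
        (∀ t ≤ T, σ i t ≠ σ j t) ∧
        (∀ t < T, ¬(σ i (t + 1) = σ j t ∧ σ i t = σ j (t + 1))) := by
    intro σ hσ i j hij
    have hd := hdisj i j hij
    constructor
    · intro t ht heq
      have hmem : σ i t ∈ R i ∩ R j := ⟨hσ i t ht, by rw [heq]; exact hσ j t ht⟩
      rw [hd] at hmem; exact hmem
    · rintro t ht ⟨h1, h2⟩
      have hmem : σ i (t+1) ∈ R i ∩ R j :=
        ⟨hσ i (t+1) ht, by rw [h1]; exact hσ j t ht.le⟩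
      rw [hd] at hmem; exact hmem
  have parti : (∀ i j : ι, i ≠ j →
        (∀ t ≤ T, τ i t ≠ τ j t) ∧
        (∀ t < T, ¬(τ i (t + 1) = τ j t ∧ τ i t = τ j (t + 1)))) ↔
      (∀ k : κ, ∀ i j : ι, f i = k → f j = k → i ≠ j →
        (∀ t ≤ T, τ i t ≠ τ j t) ∧
        (∀ t < T, ¬(τ i (t + 1) = τ j t ∧ τ i t = τ j (t + 1)))) := by
    constructor
    · intro h k i j _ _ hij; exact h i j hij
    · intro h i j hij
      by_cases hf : f i = f j
      · exact h (f j) i j hf rfl hij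
      · exact cross τ hτR i j hf
  refine ⟨parti, ?_⟩
  intro hcfτ
  constructor
  · intro hopt k σ hσR hσcf
    set σ' : ι → ℕ → V := fun i => if f i = k then σ i else τ i with hσ'def
    have hσ'R : ∀ i : ι, ∀ t ≤ T, σ' i t ∈ R i := by
      intro i t ht
      by_cases hk : f i = k
      · simp only [hσ'def, if_pos hk]; exact hσR i hk t ht
      · simp only [hσ'def, if_neg hk]; exact hτR i t ht
    have hσ'cf : ∀ i j : ι, i ≠ j →
        (∀ t ≤ T, σ' i t ≠ σ' j t) ∧
        (∀ t < T, ¬(σ' i (t + 1) = σ' j t ∧ σ' i t = σ' j (t + 1))) := by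
      intro i j hij
      by_cases hf : f i = f j
      · by_cases hk : f i = k
        · have hjk : f j = k := hf ▸ hk
          simp only [hσ'def, if_pos hk, if_pos hjk]
          exact hσcf i j hk hjk hij
        · have hjk : ¬ f j = k := hf ▸ hk
          simp only [hσ'def, if_neg hk, if_neg hjk]
          exact hcfτ i j hij
      · exact cross σ' hσ'R i j hf
    have key := hopt σ' hσ'R hσ'cf
    rw [← Finset.sum_filter_add_sum_filter_not Finset.univ (fun i => f i = k)
        (fun i => c i (τ i)),
      ← Finset.sum_filter_add_sum_filter_not Finset.univ (fun i => f i = k)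
        (fun i => c i (σ' i))] at key
    have e1 : ∑ i ∈ Finset.univ.filter (fun i => ¬ f i = k), c i (σ' i)
        = ∑ i ∈ Finset.univ.filter (fun i => ¬ f i = k), c i (τ i) := by
      refine Finset.sum_congr rfl fun i hi => ?_
      simp only [Finset.mem_filter] at hi
      simp [hσ'def, hi.2]
    have e2 : ∑ i ∈ Finset.univ.filter (fun i => f i = k), c i (σ' i)
        = ∑ i ∈ Finset.univ.filter (fun i => f i = k), c i (σ i) := by
      refine Finset.sum_congr rfl fun i hi => ?_
      simp only [Finset.mem_filter] at hi
      simp [hσ'def, hi.2]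
    rw [e1, e2] at key
    exact Nat.le_of_add_le_add_right key
  · intro hgrp σ hσR hσcf
    rw [← Finset.sum_fiberwise_of_maps_to
        (fun i _ => Finset.mem_image_of_mem f (Finset.mem_univ i))
        (fun i => c i (τ i)),
      ← Finset.sum_fiberwise_of_maps_to
        (fun i _ => Finset.mem_image_of_mem f (Finset.mem_univ i))
        (fun i => c i (σ i))]
    refine Finset.sum_le_sum fun k _ => ?_
    exact hgrp k σ (fun i _ t ht => hσR i t ht) (fun i j _ _ hij => hσcf i j hij)
end
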